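/- Let C₁ ⊂ E₁ and C₂ ⊂ E₂ be projective cones with projective metrics θ₁, θ₂, and let L : E₁ → E₂ be a linear operator with L(C₁) ⊂ C₂. If D := sup{θ₂(L(v), L(w)) : v, w ∈ C₁} < ∞, then for all v, w ∈ C₁, θ₂(L(v), L(w)) ≤ (1 − e^{−D}) · θ₁(v, w). -/

import Mathlib

set_option maxHeartbeats 1000000


open scoped ENNReal

variable {E : Type*} [AddCommGroup E] [Module ℝ E]

/-- The algebraic closure of a cone `C`: points `w` that can be approached from
inside `C` along some direction `v ∈ C`, i.e. `w + tₙ • v ∈ C` for some positive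
reals `tₙ → 0`. -/
def algClosure (C : Set E) : Set E :=
  {w | ∃ v ∈ C, ∀ ε : ℝ, 0 < ε → ∃ t : ℝ, 0 < t ∧ t < ε ∧ w + t • v ∈ C}

/-- `C ⊂ E \ {0}` is a projective cone: closed under positive scalar
multiplication and addition, and `C̄ ∩ (−C̄) = {0}`. -/
structure IsProjCone (C : Set E) : Prop where
  not_zero : (0 : E) ∉ C
  smul_mem : ∀ v ∈ C, ∀ t : ℝ, 0 < t → t • v ∈ C
  add_mem : ∀ v ∈ C, ∀ w ∈ C, v + w ∈ C
  sep : algClosure C ∩ (-(algClosure C)) = {0}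

/-- `α_C(v,w) = sup{t > 0 : w − t·v ∈ C}` (with `sup ∅ = 0`). -/
noncomputable def coneAlpha (C : Set E) (v w : E) : ℝ≥0∞ :=
  sSup {s : ℝ≥0∞ | ∃ t : ℝ, 0 < t ∧ s = ENNReal.ofReal t ∧ w - t • v ∈ C}

/-- `β_C(v,w) = inf{s > 0 : s·v − w ∈ C}` (with `inf ∅ = +∞`). -/
noncomputable def coneBeta (C : Set E) (v w : E) : ℝ≥0∞ :=
  sInf {s : ℝ≥0∞ | ∃ t : ℝ, 0 < t ∧ s = ENNReal.ofReal t ∧ t • v - w ∈ C}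

/-- The projective metric `θ(v,w) = log (β_C(v,w) / α_C(v,w)) ∈ [0,∞]`. -/
noncomputable def coneTheta (C : Set E) (v w : E) : EReal :=
  ENNReal.log (coneBeta C v w / coneAlpha C v w)

section birk
variable {C : Set E} {v w : E}

lemma birk_mem_algClosure (hC : IsProjCone C) (hv : v ∈ C) : v ∈ algClosure C := by
  refine ⟨v, hv, fun ε hε => ⟨ε/2, by linarith, by linarith, ?_⟩⟩
  have : v + (ε/2) • v = (1 + ε/2) • v := by module
  rw [this]
  exact hC.smul_mem v hv _ (by linarith)

lemma birk_neg_not_mem (hC : IsProjCone C) (hv : v ∈ C) : -v ∉ algClosure C := by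
  intro h
  have hmem : v ∈ algClosure C ∩ (-(algClosure C)) :=
    ⟨birk_mem_algClosure hC hv, by simpa [Set.mem_neg] using h⟩
  rw [hC.sep] at hmem
  exact hC.not_zero (hmem ▸ hv)

/-- any element of the α-set is smaller than any element of the β-set -/
lemma birk_lt (hC : IsProjCone C) (hv : v ∈ C) {t s : ℝ}
    (hwt : w - t • v ∈ C) (hsw : s • v - w ∈ C) : t < s := by
  by_contra h
  push_neg at h   -- s ≤ t
  have hsum : (w - t • v) + (s • v - w) ∈ C := hC.add_mem _ hwt _ hsw
  have heq : (w - t • v) + (s • v - w) = (s - t) • v := by module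
  rw [heq] at hsum
  rcases eq_or_lt_of_le h with he | hlt
  · apply hC.not_zero
    rw [he, sub_self, zero_smul] at hsum
    exact hsum
  · have hpos : (0:ℝ) < (t - s)⁻¹ := inv_pos.2 (by linarith)
    have h2 : (t - s)⁻¹ • ((s - t) • v) ∈ C := hC.smul_mem _ hsum _ hpos
    have h3 : (t - s)⁻¹ • ((s - t) • v) = -v := by
      rw [smul_smul, show (t - s)⁻¹ * (s - t) = -1 by
        rw [inv_mul_eq_div, div_eq_iff (sub_ne_zero.2 (ne_of_gt hlt))]; ring, neg_one_smul]
    rw [h3] at h2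
    have h0 : v + -v ∈ C := hC.add_mem _ hv _ h2
    rw [add_neg_cancel] at h0
    exact hC.not_zero h0

lemma birk_beta_pos (hC : IsProjCone C) (hv : v ∈ C) (hw : w ∈ C) :
    0 < coneBeta C v w := by
  rw [pos_iff_ne_zero]
  intro h0
  apply birk_neg_not_mem hC hw
  refine ⟨v, hv, fun ε hε => ?_⟩
  have hlt : coneBeta C v w < ENNReal.ofReal ε := by
    rw [h0]; simpa using hε
  obtain ⟨x, ⟨t, ht, rfl, hm⟩, hxε⟩ := sInf_lt_iff.1 hlt
  refine ⟨t, ht, ?_, ?_⟩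
  · exact (ENNReal.ofReal_lt_ofReal_iff hε).1 hxε
  · rwa [neg_add_eq_sub]
lemma birk_alpha_lt_top (hC : IsProjCone C) (hv : v ∈ C) (hw : w ∈ C) :
    coneAlpha C v w < ⊤ := by
  rw [lt_top_iff_ne_top]
  intro htop
  apply birk_neg_not_mem hC hv
  refine ⟨w, hw, fun ε hε => ?_⟩
  have hlt : ENNReal.ofReal (1/ε) < coneAlpha C v w := by
    rw [htop]; exact ENNReal.ofReal_lt_top
  obtain ⟨x, ⟨t, ht, rfl, hm⟩, hxε⟩ := lt_sSup_iff.1 hlt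
  have ht0 : 0 < t := ht
  have h1ε : 1/ε < t := by rwa [ENNReal.ofReal_lt_ofReal_iff ht0] at hxε
  refine ⟨1/t, by positivity, ?_, ?_⟩
  · rw [div_lt_iff₀ ht0]
    rw [div_lt_iff₀ hε] at h1ε
    nlinarith
  · have : -v + (1/t) • w = (1/t) • (w - t • v) := by
      match_scalars <;> field_simp
    rw [this]
    exact hC.smul_mem _ hm _ (by positivity)

lemma birk_alpha_le_beta (hC : IsProjCone C) (hv : v ∈ C) :
    coneAlpha C v w ≤ coneBeta C v w := by
  apply sSup_le
  rintro x ⟨t, ht, rfl, hm⟩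
  apply le_sInf
  rintro y ⟨s, hs, rfl, hm'⟩
  exact ENNReal.ofReal_le_ofReal (birk_lt hC hv hm hm').le

lemma birk_theta_nonneg (hC : IsProjCone C) (hv : v ∈ C) (hw : w ∈ C) :
    0 ≤ coneTheta C v w := by
  rw [coneTheta, ← ENNReal.log_one, ENNReal.log_le_log_iff]
  rcases eq_or_ne (coneAlpha C v w) 0 with h0 | h0
  · rw [h0, ENNReal.div_zero (birk_beta_pos hC hv hw).ne']
    exact le_top
  · rw [ENNReal.le_div_iff_mul_le (Or.inl h0) (Or.inl (birk_alpha_lt_top hC hv hw).ne), one_mul]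
    exact birk_alpha_le_beta hC hv

lemma birk_theta_le_iff (d : ℝ) :
    coneTheta C v w ≤ (d : EReal) ↔
      coneBeta C v w / coneAlpha C v w ≤ ENNReal.ofReal (Real.exp d) := by
  rw [coneTheta, show ((d : EReal)) = ENNReal.log (ENNReal.ofReal (Real.exp d)) by
    rw [ENNReal.log_ofReal_of_pos (Real.exp_pos d), Real.log_exp],
    ENNReal.log_le_log_iff]

end birk

lemma birk_stepA {x c : ℝ} (hx : 1 ≤ x) (hc : 1 ≤ c) :
    1 + c * x ≤ x ^ (1 - 1/c^2 : ℝ) * (c + x) := by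
  have hx0 : (0:ℝ) < x := lt_of_lt_of_le one_pos hx
  have hc0 : (0:ℝ) < c := lt_of_lt_of_le one_pos hc
  have hc2 : (0:ℝ) < c^2 := by positivity
  set p : ℝ := 1/c^2 with hp
  have hp0 : 0 ≤ p := by positivity
  have hp1 : p ≤ 1 := by rw [hp, div_le_one hc2]; nlinarith
  have hbern : x ^ p ≤ 1 + p * (x - 1) := by
    have := rpow_one_add_le_one_add_mul_self (s := x - 1) (by linarith) hp0 hp1
    simpa using this
  have hxp : (0:ℝ) < x ^ p := Real.rpow_pos_of_pos hx0 p
  have hsub : x ^ (1 - p : ℝ) = x / x ^ p := by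
    rw [Real.rpow_sub hx0, Real.rpow_one]
  rw [hsub, div_mul_eq_mul_div, le_div_iff₀ hxp]
  calc (1 + c * x) * x ^ p ≤ (1 + c * x) * (1 + p * (x - 1)) := by
        apply mul_le_mul_of_nonneg_left hbern; nlinarith
    _ ≤ x * (c + x) := by
        rw [hp, ← sub_nonneg]
        have h0 : (0:ℝ) ≤ x + c*x^2 - c - 1 := by
          nlinarith [mul_nonneg hc0.le (by nlinarith : (0:ℝ) ≤ x^2 - 1)]
        have h1 : (0:ℝ) ≤ (c - 1) * (x + c*x^2 - c - 1) := mul_nonneg (by linarith) h0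
        have h2 : x * (c + x) - (1 + c * x) * (1 + 1/c^2 * (x - 1)) =
            ((c-1) * (x + c*x^2 - c - 1)) / c^2 := by field_simp; ring
        rw [h2]; positivity

lemma birk_key {t s ρ lam K : ℝ} (ht : 0 < t) (hts : t ≤ s) (hρ : 0 < ρ)
    (hlam : 0 < lam) (hK : 1 ≤ K) (hlK : lam ≤ K * ρ) :
    Real.log ((s + ρ*t)*(1+lam) / ((1+ρ)*(s+lam*t))) ≤ (1 - 1/K) * Real.log (s/t) := by
  have hs : (0:ℝ) < s := lt_of_lt_of_le ht hts
  have hK0 : (0:ℝ) < K := lt_of_lt_of_le one_pos hK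
  set y : ℝ := s / t with hy
  have hy1 : 1 ≤ y := (one_le_div ht).2 hts
  have hy0 : (0:ℝ) < y := lt_of_lt_of_le one_pos hy1
  set x : ℝ := Real.sqrt y with hxdef
  set c : ℝ := Real.sqrt K with hcdef
  have hx1 : 1 ≤ x := by rw [hxdef, show (1:ℝ) = Real.sqrt 1 by simp]; exact Real.sqrt_le_sqrt hy1
  have hc1 : 1 ≤ c := by rw [hcdef, show (1:ℝ) = Real.sqrt 1 by simp]; exact Real.sqrt_le_sqrt hK
  have hx0 : (0:ℝ) < x := lt_of_lt_of_le one_pos hx1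
  have hc0 : (0:ℝ) < c := lt_of_lt_of_le one_pos hc1
  have hx2 : x^2 = y := Real.sq_sqrt hy0.le
  have hc2 : c^2 = K := Real.sq_sqrt hK0.le
  set M : ℝ := y ^ (1 - 1/K : ℝ) with hM
  have hM1 : 1 ≤ M := Real.one_le_rpow hy1 (by rw [sub_nonneg, div_le_one hK0]; exact hK)
  have hMx : M = (x ^ (1 - 1/c^2 : ℝ))^2 := by
    rw [hM, ← hx2, hc2, ← Real.rpow_natCast (x ^ (1 - 1/K : ℝ)) 2, ← Real.rpow_natCast x 2,
      ← Real.rpow_mul hx0.le, ← Real.rpow_mul hx0.le]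
    norm_num [mul_comm]
  -- step B : (1+c*x)^2 ≤ M * (c+x)^2
  have hB : (1 + c*x)^2 ≤ M * (c + x)^2 := by
    have hA := birk_stepA hx1 hc1
    have h0 : (0:ℝ) ≤ 1 + c*x := by positivity
    calc (1 + c*x)^2 ≤ (x ^ (1 - 1/c^2 : ℝ) * (c + x))^2 :=
          pow_le_pow_left₀ h0 hA 2
      _ = M * (c + x)^2 := by rw [hMx]; ring
  -- step C : polynomial inequality in ρ
  have hcx : (0:ℝ) ≤ (1 + c*x)^2 - (c + x)^2 := by nlinarith
  have hC : s + (K*s+t)*ρ + K*t*ρ^2 ≤ M * (s + (s+K*t)*ρ + K*t*ρ^2) := by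
    have hst : s = t * x^2 := by rw [hx2, hy]; field_simp
    have hKc : K = c^2 := hc2.symm
    have hpoly : (x^2 + (c^2*x^2+1)*ρ + c^2*ρ^2) * (c+x)^2 ≤
        (1 + c*x)^2 * (x^2 + (x^2+c^2)*ρ + c^2*ρ^2) := by
      have hid : (1 + c*x)^2 * (x^2 + (x^2+c^2)*ρ + c^2*ρ^2)
          - (x^2 + (c^2*x^2+1)*ρ + c^2*ρ^2) * (c+x)^2
          = ((1+c*x)^2 - (c+x)^2) * (c*ρ-x)^2 := by ring
      nlinarith [mul_nonneg hcx (sq_nonneg (c*ρ-x)), hid]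
    have hden : (0:ℝ) < (c+x)^2 := by positivity
    have hq : (0:ℝ) < x^2 + (x^2+c^2)*ρ + c^2*ρ^2 := by positivity
    have h2 : (1 + c*x)^2 * (x^2 + (x^2+c^2)*ρ + c^2*ρ^2) ≤
        M * (c+x)^2 * (x^2 + (x^2+c^2)*ρ + c^2*ρ^2) :=
      mul_le_mul_of_nonneg_right hB hq.le
    have h3 : (x^2 + (c^2*x^2+1)*ρ + c^2*ρ^2) * (c+x)^2 ≤
        M * (c+x)^2 * (x^2 + (x^2+c^2)*ρ + c^2*ρ^2) := le_trans hpoly h2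
    have h4 : x^2 + (c^2*x^2+1)*ρ + c^2*ρ^2 ≤ M * (x^2 + (x^2+c^2)*ρ + c^2*ρ^2) := by
      have := (mul_le_mul_iff_left₀ hden).1 (by linarith [h3] :
        (x^2 + (c^2*x^2+1)*ρ + c^2*ρ^2) * (c+x)^2 ≤ (M * (x^2 + (x^2+c^2)*ρ + c^2*ρ^2)) * (c+x)^2)
      exact this
    -- multiply by t > 0 and rewrite s = t x^2, K = c^2
    have h5 : t * (x^2 + (c^2*x^2+1)*ρ + c^2*ρ^2) ≤ t * (M * (x^2 + (x^2+c^2)*ρ + c^2*ρ^2)) :=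
      mul_le_mul_of_nonneg_left h4 ht.le
    rw [hst, hKc]
    nlinarith [h5]
  -- step D : monotonicity in lam and combination
  have hP0 : (0:ℝ) < (s + ρ*t)*(1+lam) := by positivity
  have hQ0 : (0:ℝ) < (1+ρ)*(s+lam*t) := by positivity
  have hKρ : (0:ℝ) < s + K*ρ*t := by positivity
  have hmain : (s + ρ*t)*(1+lam) ≤ M * ((1+ρ)*(s+lam*t)) := by
    have hmono : (1+lam)*(s+K*ρ*t) ≤ (1+K*ρ)*(s+lam*t) := by
      nlinarith [mul_nonneg (sub_nonneg.2 hlK) (sub_nonneg.2 hts)]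
    have hii : (s+ρ*t)*(1+K*ρ) ≤ M * ((1+ρ)*(s+K*ρ*t)) := by nlinarith [hC]
    have h5 : ((s+ρ*t)*(1+lam)) * (s+K*ρ*t) ≤ (M * ((1+ρ)*(s+lam*t))) * (s+K*ρ*t) := by
      calc ((s+ρ*t)*(1+lam)) * (s+K*ρ*t) = (s+ρ*t) * ((1+lam)*(s+K*ρ*t)) := by ring
        _ ≤ (s+ρ*t) * ((1+K*ρ)*(s+lam*t)) :=
            mul_le_mul_of_nonneg_left hmono (by positivity)
        _ = ((s+ρ*t)*(1+K*ρ)) * (s+lam*t) := by ring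
        _ ≤ (M * ((1+ρ)*(s+K*ρ*t))) * (s+lam*t) :=
            mul_le_mul_of_nonneg_right hii (by positivity)
        _ = (M * ((1+ρ)*(s+lam*t))) * (s+K*ρ*t) := by ring
    exact (mul_le_mul_iff_left₀ hKρ).1 h5
  have hdiv : (s + ρ*t)*(1+lam) / ((1+ρ)*(s+lam*t)) ≤ M :=
    (div_le_iff₀ hQ0).2 (by linarith [hmain])
  calc Real.log ((s + ρ*t)*(1+lam) / ((1+ρ)*(s+lam*t))) ≤ Real.log M :=
        Real.log_le_log (by positivity) hdiv
    _ = (1 - 1/K) * Real.log (s/t) := by rw [hM, Real.log_rpow hy0]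

/-- **Birkhoff's contraction theorem.** If a linear operator `L` maps the
projective cone `C₁` into the projective cone `C₂`, and the image has
`θ₂`-diameter at most `D < ∞`, then `L` is a `(1 − e^{−D})`-contraction from
`(C₁, θ₁)` to `(C₂, θ₂)`. -/
theorem birkhoff_contraction
    {E₁ E₂ : Type*} [AddCommGroup E₁] [Module ℝ E₁] [AddCommGroup E₂] [Module ℝ E₂]
    (C₁ : Set E₁) (C₂ : Set E₂) (hC₁ : IsProjCone C₁) (hC₂ : IsProjCone C₂)
    (L : E₁ →ₗ[ℝ] E₂) (hL : ∀ v ∈ C₁, L v ∈ C₂)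
    (D : ℝ) (hD : ∀ v ∈ C₁, ∀ w ∈ C₁, coneTheta C₂ (L v) (L w) ≤ (D : EReal)) :
    ∀ v ∈ C₁, ∀ w ∈ C₁,
      coneTheta C₂ (L v) (L w) ≤ ((1 - Real.exp (-D) : ℝ) : EReal) * coneTheta C₁ v w := by

  intro v hv w hw
  have hD0 : (0:ℝ) ≤ D := by
    have h1 := birk_theta_nonneg hC₂ (hL v hv) (hL v hv)
    have h2 := hD v hv v hv
    exact EReal.coe_nonneg.1 (le_trans h1 h2)
  by_cases htop : coneTheta C₁ v w = ⊤
  · rcases eq_or_lt_of_le hD0 with hDeq | hDpos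
    · have hθ2le : coneTheta C₂ (L v) (L w) ≤ ((0:ℝ) : EReal) := by
        rw [hDeq]; exact hD v hv w hw
      have hco : ((1 - Real.exp (-D) : ℝ) : EReal) = (0 : EReal) := by
        rw [← hDeq]; norm_num
      rw [htop, hco, zero_mul]
      exact le_trans hθ2le (by norm_num)
    · rw [htop, EReal.mul_top_of_pos]
      · exact le_top
      · apply EReal.coe_pos.2
        have : Real.exp (-D) < 1 := Real.exp_lt_one_iff.2 (by linarith)
        linarith
  · -- main case
    have hθ1nn := birk_theta_nonneg hC₁ hv hw
    have hbot : coneTheta C₁ v w ≠ ⊥ := by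
      intro h; rw [h] at hθ1nn; exact (not_le.2 (bot_lt_iff_ne_bot.2 (by simp))) hθ1nn
    set Θ := (coneTheta C₁ v w).toReal with hΘdef
    have hθ1 : coneTheta C₁ v w = (Θ : EReal) := (EReal.coe_toReal htop hbot).symm
    have hΘ0 : 0 ≤ Θ := EReal.coe_nonneg.1 (hθ1 ▸ hθ1nn)
    have hθ2nn := birk_theta_nonneg hC₂ (hL v hv) (hL w hw)
    have hθ2top : coneTheta C₂ (L v) (L w) ≠ ⊤ :=
      ne_top_of_le_ne_top (EReal.coe_ne_top D) (hD v hv w hw)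
    have hθ2bot : coneTheta C₂ (L v) (L w) ≠ ⊥ := by
      intro h; rw [h] at hθ2nn; exact (not_le.2 (bot_lt_iff_ne_bot.2 (by simp))) hθ2nn
    set T := (coneTheta C₂ (L v) (L w)).toReal with hTdef
    have hθ2 : coneTheta C₂ (L v) (L w) = (T : EReal) := (EReal.coe_toReal hθ2top hθ2bot).symm
    rw [hθ2, hθ1, ← EReal.coe_mul, EReal.coe_le_coe_iff]
    -- suffices: ∀ δ > 0, T ≤ (1 - exp (-(D+δ))) * (Θ + δ)
    have hkey : ∀ δ : ℝ, 0 < δ → T ≤ (1 - Real.exp (-(D+δ))) * (Θ + δ) := by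
      intro δ hδ
      -- facts about α₁ β₁
      have hθ1' : ENNReal.log (coneBeta C₁ v w / coneAlpha C₁ v w) = (Θ : EReal) := hθ1
      have hB0 : coneBeta C₁ v w ≠ 0 := (birk_beta_pos hC₁ hv hw).ne'
      have hAtop : coneAlpha C₁ v w ≠ ⊤ := (birk_alpha_lt_top hC₁ hv hw).ne
      have hR : coneBeta C₁ v w / coneAlpha C₁ v w = ENNReal.ofReal (Real.exp Θ) := by
        apply ENNReal.log_injective
        rw [hθ1', ENNReal.log_ofReal_of_pos (Real.exp_pos Θ), Real.log_exp]
      have hA0 : coneAlpha C₁ v w ≠ 0 := by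
        intro h
        rw [h, ENNReal.div_zero hB0] at hR
        exact ENNReal.ofReal_ne_top hR.symm
      have hBtop : coneBeta C₁ v w ≠ ⊤ := by
        intro h
        rw [h, ENNReal.top_div_of_ne_top hAtop] at hR
        exact ENNReal.ofReal_ne_top hR.symm
      set a1 := (coneAlpha C₁ v w).toReal with ha1def
      set b1 := (coneBeta C₁ v w).toReal with hb1def
      have ha1pos : 0 < a1 := ENNReal.toReal_pos hA0 hAtop
      have hb1pos : 0 < b1 := ENNReal.toReal_pos hB0 hBtop
      have hba : b1 = Real.exp Θ * a1 := by
        have := congrArg ENNReal.toReal hR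
        rw [ENNReal.toReal_div, ENNReal.toReal_ofReal (Real.exp_pos Θ).le] at this
        rw [div_eq_iff (ENNReal.toReal_pos hA0 hAtop).ne', ← hb1def, ← ha1def] at this
        linarith [this]
      -- choose t
      have hAlt : coneAlpha C₁ v w * ENNReal.ofReal (Real.exp (-(δ/2))) < coneAlpha C₁ v w := by
        nth_rewrite 2 [← mul_one (coneAlpha C₁ v w)]
        exact (ENNReal.mul_lt_mul_iff_right hA0 hAtop).2
          (ENNReal.ofReal_lt_one.2 (Real.exp_lt_one_iff.2 (by linarith)))
      rw [coneAlpha] at hAlt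
      obtain ⟨x, ⟨t, ht, rfl, hmt⟩, hltt⟩ := lt_sSup_iff.1 hAlt
      have hta : a1 * Real.exp (-(δ/2)) < t := by
        have := (ENNReal.toReal_lt_toReal (ENNReal.mul_ne_top hAtop ENNReal.ofReal_ne_top)
          ENNReal.ofReal_ne_top).2 hltt
        rwa [ENNReal.toReal_mul, ENNReal.toReal_ofReal (Real.exp_pos _).le,
          ENNReal.toReal_ofReal ht.le] at this
      -- choose s
      have hBlt : coneBeta C₁ v w < coneBeta C₁ v w * ENNReal.ofReal (Real.exp (δ/2)) := by
        nth_rewrite 1 [← mul_one (coneBeta C₁ v w)]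
        exact (ENNReal.mul_lt_mul_iff_right hB0 hBtop).2
          (ENNReal.one_lt_ofReal.2 (Real.one_lt_exp_iff.2 (by linarith)))
      rw [coneBeta] at hBlt
      obtain ⟨y, ⟨s, hs, rfl, hms⟩, hlts⟩ := sInf_lt_iff.1 hBlt
      have hsb : s < b1 * Real.exp (δ/2) := by
        have := (ENNReal.toReal_lt_toReal ENNReal.ofReal_ne_top
          (ENNReal.mul_ne_top hBtop ENNReal.ofReal_ne_top)).2 hlts
        rwa [ENNReal.toReal_mul, ENNReal.toReal_ofReal (Real.exp_pos _).le,
          ENNReal.toReal_ofReal hs.le] at this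
      have hts : t < s := birk_lt hC₁ hv hmt hms
      -- log bound
      have hlogst : Real.log (s/t) ≤ Θ + δ := by
        rw [Real.log_le_iff_le_exp (by positivity), div_le_iff₀ ht]
        have hee : Real.exp (Θ + δ) * Real.exp (-(δ/2)) = Real.exp Θ * Real.exp (δ/2) := by
          rw [← Real.exp_add, ← Real.exp_add]; congr 1; ring
        nlinarith [Real.exp_pos (Θ + δ), Real.exp_pos (δ/2), Real.exp_pos (-(δ/2)),
          mul_lt_mul_of_pos_left hta (Real.exp_pos (Θ + δ))]
      -- images
      have hLa : L (w - t • v) = L w - t • L v := by simp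
      have hLb : L (s • v - w) = s • L v - L w := by simp
      have haC : L w - t • L v ∈ C₂ := hLa ▸ hL _ hmt
      have hbC : s • L v - L w ∈ C₂ := hLb ▸ hL _ hms
      have hab := hD (w - t • v) hmt (s • v - w) hms
      rw [hLa, hLb, birk_theta_le_iff] at hab
      have hBab0 : coneBeta C₂ (L w - t • L v) (s • L v - L w) ≠ 0 :=
        (birk_beta_pos hC₂ haC hbC).ne'
      have hAabtop : coneAlpha C₂ (L w - t • L v) (s • L v - L w) ≠ ⊤ :=
        (birk_alpha_lt_top hC₂ haC hbC).ne
      have hAab0 : coneAlpha C₂ (L w - t • L v) (s • L v - L w) ≠ 0 := by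
        intro h
        rw [h, ENNReal.div_zero hBab0] at hab
        exact ENNReal.ofReal_ne_top (top_le_iff.1 hab)
      have habmul := (ENNReal.div_le_iff hAab0 hAabtop).1 hab
      have hBabtop : coneBeta C₂ (L w - t • L v) (s • L v - L w) ≠ ⊤ :=
        ne_top_of_le_ne_top (ENNReal.mul_ne_top ENNReal.ofReal_ne_top hAabtop) habmul
      set aab := (coneAlpha C₂ (L w - t • L v) (s • L v - L w)).toReal with haabdef
      set bab := (coneBeta C₂ (L w - t • L v) (s • L v - L w)).toReal with hbabdef
      have haabpos : 0 < aab := ENNReal.toReal_pos hAab0 hAabtop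
      have hbabpos : 0 < bab := ENNReal.toReal_pos hBab0 hBabtop
      have hbab_le : bab ≤ Real.exp D * aab := by
        have := (ENNReal.toReal_le_toReal hBabtop
          (ENNReal.mul_ne_top ENNReal.ofReal_ne_top hAabtop)).2 habmul
        rwa [ENNReal.toReal_mul, ENNReal.toReal_ofReal (Real.exp_pos D).le] at this
      -- choose ρ
      have hAablt : coneAlpha C₂ (L w - t • L v) (s • L v - L w) *
          ENNReal.ofReal (Real.exp (-(δ/2))) <
          coneAlpha C₂ (L w - t • L v) (s • L v - L w) := by
        nth_rewrite 2 [← mul_one (coneAlpha C₂ (L w - t • L v) (s • L v - L w))]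
        exact (ENNReal.mul_lt_mul_iff_right hAab0 hAabtop).2
          (ENNReal.ofReal_lt_one.2 (Real.exp_lt_one_iff.2 (by linarith)))
      rw [coneAlpha] at hAablt
      obtain ⟨x, ⟨ρ, hρ, rfl, hmρ⟩, hltρ⟩ := lt_sSup_iff.1 hAablt
      have hρa : aab * Real.exp (-(δ/2)) < ρ := by
        have := (ENNReal.toReal_lt_toReal (ENNReal.mul_ne_top hAabtop ENNReal.ofReal_ne_top)
          ENNReal.ofReal_ne_top).2 hltρ
        rwa [ENNReal.toReal_mul, ENNReal.toReal_ofReal (Real.exp_pos _).le,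
          ENNReal.toReal_ofReal hρ.le] at this
      -- choose lam
      have hBablt : coneBeta C₂ (L w - t • L v) (s • L v - L w) <
          coneBeta C₂ (L w - t • L v) (s • L v - L w) * ENNReal.ofReal (Real.exp (δ/2)) := by
        nth_rewrite 1 [← mul_one (coneBeta C₂ (L w - t • L v) (s • L v - L w))]
        exact (ENNReal.mul_lt_mul_iff_right hBab0 hBabtop).2
          (ENNReal.one_lt_ofReal.2 (Real.one_lt_exp_iff.2 (by linarith)))
      rw [coneBeta] at hBablt
      obtain ⟨y, ⟨lam, hlam, rfl, hmlam⟩, hltlam⟩ := sInf_lt_iff.1 hBablt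
      have hlamb : lam < bab * Real.exp (δ/2) := by
        have := (ENNReal.toReal_lt_toReal ENNReal.ofReal_ne_top
          (ENNReal.mul_ne_top hBabtop ENNReal.ofReal_ne_top)).2 hltlam
        rwa [ENNReal.toReal_mul, ENNReal.toReal_ofReal (Real.exp_pos _).le,
          ENNReal.toReal_ofReal hlam.le] at this
      have hρlam : lam ≤ Real.exp (D + δ) * ρ := by
        have he1 : Real.exp (δ/2) * Real.exp (δ/2) = Real.exp δ := by
          rw [← Real.exp_add]; congr 1; ring
        have he2 : Real.exp (D + δ) = Real.exp D * Real.exp δ := by rw [← Real.exp_add]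
        have he3 : Real.exp (-(δ/2)) * Real.exp (δ/2) = 1 := by
          rw [← Real.exp_add]; norm_num
        have haab_lt : aab < ρ * Real.exp (δ/2) := by
          nlinarith [mul_lt_mul_of_pos_right hρa (Real.exp_pos (δ/2))]
        have h4 : bab * Real.exp (δ/2) ≤ Real.exp D * aab * Real.exp (δ/2) :=
          mul_le_mul_of_nonneg_right hbab_le (Real.exp_pos _).le
        have h5 : Real.exp D * aab * Real.exp (δ/2) ≤
            Real.exp D * (ρ * Real.exp (δ/2)) * Real.exp (δ/2) := by
          have h5' := mul_lt_mul_of_pos_right haab_lt (Real.exp_pos (δ/2))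
          nlinarith [Real.exp_pos D]
        have h6 : Real.exp D * (ρ * Real.exp (δ/2)) * Real.exp (δ/2) = Real.exp (D + δ) * ρ := by
          rw [he2, ← he1]; ring
        linarith
      -- memberships for β/α of (L v, L w)
      have h1ρ : (0:ℝ) < 1 + ρ := by linarith
      have h1lam : (0:ℝ) < 1 + lam := by linarith
      have hmem1 : ((s + ρ*t)/(1+ρ)) • L v - L w ∈ C₂ := by
        have h := hC₂.smul_mem _ hmρ _ (inv_pos.2 h1ρ)
        have heq : (1+ρ)⁻¹ • ((s • L v - L w) - ρ • (L w - t • L v)) =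
            ((s + ρ*t)/(1+ρ)) • L v - L w := by
          match_scalars <;> field_simp <;> ring
        rwa [heq] at h
      have hmem2 : L w - ((s + lam*t)/(1+lam)) • L v ∈ C₂ := by
        have h := hC₂.smul_mem _ hmlam _ (inv_pos.2 h1lam)
        have heq : (1+lam)⁻¹ • (lam • (L w - t • L v) - (s • L v - L w)) =
            L w - ((s + lam*t)/(1+lam)) • L v := by
          match_scalars <;> field_simp <;> ring
        rwa [heq] at h
      have hbeta2 : coneBeta C₂ (L v) (L w) ≤ ENNReal.ofReal ((s + ρ*t)/(1+ρ)) :=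
        sInf_le ⟨(s + ρ*t)/(1+ρ), by positivity, rfl, hmem1⟩
      have halpha2 : ENNReal.ofReal ((s + lam*t)/(1+lam)) ≤ coneAlpha C₂ (L v) (L w) :=
        le_sSup ⟨(s + lam*t)/(1+lam), by positivity, rfl, hmem2⟩
      have hQpos : (0:ℝ) < (s + lam*t)/(1+lam) := by positivity
      have hfin : coneTheta C₂ (L v) (L w) ≤
          ((Real.log (((s + ρ*t)/(1+ρ)) / ((s + lam*t)/(1+lam)))) : EReal) := by
        rw [coneTheta]
        have hdivle : coneBeta C₂ (L v) (L w) / coneAlpha C₂ (L v) (L w) ≤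
            ENNReal.ofReal (((s + ρ*t)/(1+ρ)) / ((s + lam*t)/(1+lam))) := by
          rw [ENNReal.ofReal_div_of_pos hQpos]
          exact ENNReal.div_le_div hbeta2 halpha2
        calc ENNReal.log (coneBeta C₂ (L v) (L w) / coneAlpha C₂ (L v) (L w))
            ≤ ENNReal.log (ENNReal.ofReal (((s + ρ*t)/(1+ρ)) / ((s + lam*t)/(1+lam)))) :=
              ENNReal.log_monotone hdivle
          _ = _ := by rw [ENNReal.log_ofReal_of_pos (by positivity)]
      rw [hθ2] at hfin
      have hTle : T ≤ Real.log (((s + ρ*t)/(1+ρ)) / ((s + lam*t)/(1+lam))) :=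
        EReal.coe_le_coe_iff.1 hfin
      have hslamt : s + lam*t ≠ 0 := by positivity
      have hargeq : ((s + ρ*t)/(1+ρ)) / ((s + lam*t)/(1+lam)) =
          (s + ρ*t)*(1+lam) / ((1+ρ)*(s + lam*t)) := by
        field_simp
      have hkey2 := birk_key ht hts.le (by positivity : (0:ℝ) < ρ) hlam
        (Real.one_le_exp (by linarith : (0:ℝ) ≤ D + δ)) hρlam
      have hfac : (0:ℝ) ≤ 1 - 1/Real.exp (D + δ) := by
        have h1 : 1 ≤ Real.exp (D + δ) := Real.one_le_exp (by linarith)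
        have h2 : 1/Real.exp (D + δ) ≤ 1 := by
          rw [div_le_one (Real.exp_pos _)]; exact h1
        linarith
      have hfinal : T ≤ (1 - 1/Real.exp (D + δ)) * (Θ + δ) := by
        calc T ≤ Real.log (((s + ρ*t)/(1+ρ)) / ((s + lam*t)/(1+lam))) := hTle
          _ = Real.log ((s + ρ*t)*(1+lam) / ((1+ρ)*(s + lam*t))) := by rw [hargeq]
          _ ≤ (1 - 1/Real.exp (D + δ)) * Real.log (s/t) := hkey2
          _ ≤ (1 - 1/Real.exp (D + δ)) * (Θ + δ) :=
              mul_le_mul_of_nonneg_left hlogst hfac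
      rw [Real.exp_neg, inv_eq_one_div]
      exact hfinal
    -- take the limit δ → 0⁺
    have hcont : Continuous fun δ : ℝ => (1 - Real.exp (-(D+δ))) * (Θ + δ) :=
      (continuous_const.sub
        (Real.continuous_exp.comp (continuous_const.add continuous_id).neg)).mul
        (continuous_const.add continuous_id)
    have htend : Filter.Tendsto (fun δ : ℝ => (1 - Real.exp (-(D+δ))) * (Θ + δ))
        (nhdsWithin 0 (Set.Ioi 0)) (nhds ((1 - Real.exp (-D)) * Θ)) := by
      have h0 := hcont.tendsto' 0 ((1 - Real.exp (-D)) * Θ) (by norm_num)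
      exact h0.mono_left nhdsWithin_le_nhds
    exact ge_of_tendsto htend (eventually_nhdsWithin_of_forall (fun δ hδ => hkey δ hδ))
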